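/- arXiv:2307.10187 — 4 statements merged into one kernel-verified Lean document; each statement's English description precedes it below -/
import Mathlib

section
/- Let ε ≥ 0 and q ∈ (0,1]. If two probability measures P and Q on a measurable space satisfy P(A) ≤ e^ε Q(A) and Q(A) ≤ e^ε P(A) for all measurable A, then the mixtures P' = (1-q)·Q + q·P and Q satisfy P'(A) ≤ e^{ψ} Q(A) and Q(A) ≤ e^{ψ} P'(A) for all measurable A, where ψ = log(1 + q(e^ε - 1)). -/
open MeasureTheory Real

theorem stmt_0 {Ω : Type*} [MeasurableSpace Ω]
    (P Q : Measure Ω) [IsProbabilityMeasure P] [IsProbabilityMeasure Q]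
    (ε q : ℝ) (hε : 0 ≤ ε) (hq0 : 0 < q) (hq1 : q ≤ 1)
    (hPQ : ∀ A : Set Ω, MeasurableSet A → P A ≤ ENNReal.ofReal (exp ε) * Q A)
    (hQP : ∀ A : Set Ω, MeasurableSet A → Q A ≤ ENNReal.ofReal (exp ε) * P A) :
    ∀ A : Set Ω, MeasurableSet A →
      (ENNReal.ofReal (1 - q) • Q + ENNReal.ofReal q • P) A ≤
        ENNReal.ofReal (exp (Real.log (1 + q * (exp ε - 1)))) * Q A ∧
      Q A ≤ ENNReal.ofReal (exp (Real.log (1 + q * (exp ε - 1)))) *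
        (ENNReal.ofReal (1 - q) • Q + ENNReal.ofReal q • P) A := by
  intro A hA
  have ht : (1:ℝ) ≤ exp ε := Real.one_le_exp hε
  have hpos : (0:ℝ) < 1 + q * (exp ε - 1) := by nlinarith
  rw [Real.exp_log hpos]
  simp only [Measure.coe_add, Measure.coe_smul, Pi.add_apply, Pi.smul_apply, smul_eq_mul]
  constructor
  · calc ENNReal.ofReal (1-q) * Q A + ENNReal.ofReal q * P A
        ≤ ENNReal.ofReal (1-q) * Q A + ENNReal.ofReal q * (ENNReal.ofReal (exp ε) * Q A) := by
          gcongr; exact hPQ A hA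
      _ = ENNReal.ofReal ((1-q) + q * exp ε) * Q A := by
          rw [← mul_assoc, ← ENNReal.ofReal_mul hq0.le, ← add_mul,
            ← ENNReal.ofReal_add (by linarith) (by positivity)]
      _ = ENNReal.ofReal (1 + q * (exp ε - 1)) * Q A := by ring_nf
  · have hP : ENNReal.ofReal (exp (-ε)) * Q A ≤ P A := by
      calc ENNReal.ofReal (exp (-ε)) * Q A
          ≤ ENNReal.ofReal (exp (-ε)) * (ENNReal.ofReal (exp ε) * P A) := by
            gcongr; exact hQP A hA
        _ = P A := by
            rw [← mul_assoc, ← ENNReal.ofReal_mul (exp_pos _).le, ← Real.exp_add]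
            simp
    have hone : (1:ℝ) ≤ (1 + q * (exp ε - 1)) * ((1-q) + q * exp (-ε)) := by
      have hst : exp ε * exp (-ε) = 1 := by rw [← Real.exp_add]; simp
      have hs : (0:ℝ) < exp (-ε) := exp_pos _
      have hid : (1 + q * (exp ε - 1)) * ((1-q) + q * exp (-ε)) - 1
          = q * (1-q) * (exp (-ε) * (exp ε - 1)^2) := by
        linear_combination (q * (q * (exp ε - 1) - (exp ε - 2))) * hst
      nlinarith [mul_nonneg (mul_nonneg hq0.le (sub_nonneg.2 hq1))
        (mul_nonneg hs.le (sq_nonneg (exp ε - 1)))]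
    calc Q A ≤ ENNReal.ofReal ((1 + q * (exp ε - 1)) * ((1-q) + q * exp (-ε))) * Q A := by
          apply le_mul_of_one_le_left zero_le
          exact ENNReal.one_le_ofReal.mpr hone
      _ = ENNReal.ofReal (1 + q * (exp ε - 1)) *
            ((ENNReal.ofReal (1-q) + ENNReal.ofReal (q * exp (-ε))) * Q A) := by
          rw [ENNReal.ofReal_mul hpos.le, mul_assoc,
            ENNReal.ofReal_add (sub_nonneg.2 hq1) (by positivity : (0:ℝ) ≤ q * exp (-ε))]
      _ = ENNReal.ofReal (1 + q * (exp ε - 1)) *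
            (ENNReal.ofReal (1-q) * Q A + ENNReal.ofReal q * (ENNReal.ofReal (exp (-ε)) * Q A)) := by
          rw [add_mul, ← mul_assoc, ← ENNReal.ofReal_mul hq0.le]
      _ ≤ ENNReal.ofReal (1 + q * (exp ε - 1)) *
            (ENNReal.ofReal (1-q) * Q A + ENNReal.ofReal q * P A) := by
          gcongr
end

section
/- Let ε : [1,∞) → ℝ≥0 be differentiable with derivative ε', and suppose ε(w) ≤ w·ε'(w) for all w ≥ 1. Then for all w ≥ 1, log(1 + (1/w)(e^{ε(w)} - 1)) ≥ ε(1). -/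
open Real Set

theorem stmt_3 (f f' : ℝ → ℝ)
    (hnn : ∀ w ≥ (1 : ℝ), 0 ≤ f w)
    (hd : ∀ w ≥ (1 : ℝ), HasDerivWithinAt f (f' w) (Ici 1) w)
    (hgrow : ∀ w ≥ (1 : ℝ), f w ≤ w * f' w) :
    ∀ w ≥ (1 : ℝ), f 1 ≤ Real.log (1 + (1 / w) * (exp (f w) - 1)) := by
  intro w hw
  have hw0 : (0:ℝ) < w := lt_of_lt_of_le one_pos hw
  set G : ℝ → ℝ := fun x => (exp (f x) - 1) / x with hG
  set G' : ℝ → ℝ := fun x => (exp (f x) * f' x * x - (exp (f x) - 1)) / x ^ 2 with hG'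
  have hderiv : ∀ x ∈ Ici (1:ℝ), HasDerivWithinAt G (G' x) (Ici 1) x := by
    intro x hx
    rw [hG, hG']; simpa [Pi.div_def] using (((hd x hx).exp).sub_const 1).div (hasDerivWithinAt_id x _)
      (ne_of_gt (lt_of_lt_of_le one_pos hx))
  have hmono : MonotoneOn G (Ici 1) := by
    apply monotoneOn_of_hasDerivWithinAt_nonneg (convex_Ici 1) (f' := G')
      (fun x hx => (hderiv x hx).continuousWithinAt)
    · intro x hx
      rw [interior_Ici] at hx ⊢
      exact (hderiv x (mem_Ici.mpr (le_of_lt (mem_Ioi.mp hx)))).mono Ioi_subset_Ici_self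
    · intro x hx
      rw [interior_Ici] at hx
      have hx1 : (1:ℝ) ≤ x := le_of_lt hx
      have hx0 : (0:ℝ) < x := lt_trans one_pos hx
      have h1 : f x ≤ x * f' x := hgrow x hx1
      have h2 : 0 ≤ f x := hnn x hx1
      have hpos := exp_pos (f x)
      have h := mul_le_mul_of_nonneg_right (Real.add_one_le_exp (-(f x))) hpos.le
      rw [Real.exp_neg, inv_mul_cancel₀ hpos.ne'] at h
      have h3 : exp (f x) - 1 ≤ f x * exp (f x) := by nlinarith
      have : exp (f x) - 1 ≤ (x * f' x) * exp (f x) := by nlinarith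
      have hnum : 0 ≤ exp (f x) * f' x * x - (exp (f x) - 1) := by nlinarith
      rw [hG']
      positivity
  have key : G 1 ≤ G w := hmono (by norm_num) hw hw
  have hG1 : G 1 = exp (f 1) - 1 := by simp [hG]
  have h2 : exp (f 1) ≤ 1 + (1 / w) * (exp (f w) - 1) := by
    have : (1 / w) * (exp (f w) - 1) = G w := by rw [hG]; ring
    rw [this]; linarith [key, hG1.symm.le]
  calc f 1 = Real.log (exp (f 1)) := (Real.log_exp _).symm
    _ ≤ _ := Real.log_le_log (exp_pos _) h2
end

section
/- Define θ : [0,r] → ℝ by θ(z) = (exp((a + t z)/(b + s z)) - 1)·(b + s z), with constants a, t ≥ 0 and b, s ≥ 0 with b + s z > 0 on [0,r]. Then θ is convex on [0,r]; in particular θ(z) ≤ max{θ(0), θ(r)} for all z ∈ [0,r]. -/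
open Real Set

lemma tangent_le_persp (u v y : ℝ) (hu : 0 < u) :
    exp y * ((1 - y) * u + v) ≤ u * exp (v / u) := by
  have h1 : (v / u - y) + 1 ≤ exp (v / u - y) := add_one_le_exp _
  have h2 : exp y * ((v / u - y) + 1) ≤ exp (v / u) := by
    calc exp y * ((v / u - y) + 1) ≤ exp y * exp (v / u - y) :=
          mul_le_mul_of_nonneg_left h1 (exp_pos y).le
      _ = exp (v / u) := by rw [← exp_add]; ring_nf
  have h3 := mul_le_mul_of_nonneg_left h2 hu.le
  calc exp y * ((1 - y) * u + v) = u * (exp y * ((v / u - y) + 1)) := by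
        field_simp; ring
    _ ≤ u * exp (v / u) := h3

theorem stmt_14 (r a t b s : ℝ) (hr : 0 ≤ r) (ha : 0 ≤ a) (ht : 0 ≤ t)
    (hb : 0 ≤ b) (hs : 0 ≤ s)
    (hpos : ∀ z ∈ Icc (0 : ℝ) r, 0 < b + s * z) :
    let θ : ℝ → ℝ := fun z => (exp ((a + t * z) / (b + s * z)) - 1) * (b + s * z)
    ConvexOn ℝ (Icc 0 r) θ ∧ ∀ z ∈ Icc (0 : ℝ) r, θ z ≤ max (θ 0) (θ r) := by
  intro θ
  have hconv : ConvexOn ℝ (Icc 0 r) θ := by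
    refine ⟨convex_Icc 0 r, ?_⟩
    intro x hx y hy lam mu hl hm hlm
    simp only [smul_eq_mul]
    set z := lam * x + mu * y with hzdef
    have hz : z ∈ Icc (0:ℝ) r := (convex_Icc 0 r) hx hy hl hm hlm
    have hux : 0 < b + s * x := hpos x hx
    have huy : 0 < b + s * y := hpos y hy
    have huz : 0 < b + s * z := hpos z hz
    set Y := (a + t * z) / (b + s * z) with hY
    -- θ z equals the tangent value at Y
    have hθz : θ z = exp Y * ((1 - Y) * (b + s * z) + (a + t * z)) - (b + s * z) := by
      have hYe : Y * (b + s * z) = a + t * z := div_mul_cancel₀ _ huz.ne'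
      simp only [θ]
      rw [← hY]
      linear_combination exp Y * hYe
    have hsplit : exp Y * ((1 - Y) * (b + s * z) + (a + t * z)) - (b + s * z)
        = lam * (exp Y * ((1 - Y) * (b + s * x) + (a + t * x)) - (b + s * x))
        + mu * (exp Y * ((1 - Y) * (b + s * y) + (a + t * y)) - (b + s * y)) := by
      simp only [hzdef]
      linear_combination (b - exp Y * ((1 - Y) * b + a)) * hlm
    have hxle : exp Y * ((1 - Y) * (b + s * x) + (a + t * x)) ≤
        (b + s * x) * exp ((a + t * x) / (b + s * x)) := tangent_le_persp _ _ _ hux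
    have hyle : exp Y * ((1 - Y) * (b + s * y) + (a + t * y)) ≤
        (b + s * y) * exp ((a + t * y) / (b + s * y)) := tangent_le_persp _ _ _ huy
    have hθx : θ x = (b + s * x) * exp ((a + t * x) / (b + s * x)) - (b + s * x) := by
      simp only [θ]; ring
    have hθy : θ y = (b + s * y) * exp ((a + t * y) / (b + s * y)) - (b + s * y) := by
      simp only [θ]; ring
    rw [hθz, hsplit, hθx, hθy]
    have h1 := mul_le_mul_of_nonneg_left (sub_le_sub_right hxle (b + s * x)) hl
    have h2 := mul_le_mul_of_nonneg_left (sub_le_sub_right hyle (b + s * y)) hm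
    linarith
  refine ⟨hconv, fun z hz => ?_⟩
  have h0 : (0:ℝ) ∈ Icc (0:ℝ) r := ⟨le_refl 0, hr⟩
  have h1 : r ∈ Icc (0:ℝ) r := ⟨hr, le_refl r⟩
  exact hconv.le_on_segment h0 h1 (by rwa [segment_eq_Icc hr])
end

section
/- Let ε ≥ 0, q ∈ (0,1], and set ψ = log(1 + q(e^ε - 1)). If a nonnegative real number p' satisfies p' ≤ (1 - q)·p₂ + q·e^ε·p₂ for some p₂ ≥ 0, then p' ≤ e^ψ·p₂; moreover, if p' ≥ (1 - q)·p₂ + q·e^{-ε}·p₂ then p' ≥ e^{-ψ}·p₂. -/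
open Real

theorem stmt_18 (ε q : ℝ) (hε : 0 ≤ ε) (hq0 : 0 < q) (hq1 : q ≤ 1)
    (p' p₂ : ℝ) (hp' : 0 ≤ p') (hp₂ : 0 ≤ p₂) :
    let ψ : ℝ := Real.log (1 + q * (exp ε - 1))
    (p' ≤ (1 - q) * p₂ + q * exp ε * p₂ → p' ≤ exp ψ * p₂) ∧
    ((1 - q) * p₂ + q * exp (-ε) * p₂ ≤ p' → exp (-ψ) * p₂ ≤ p') := by
  intro ψ
  have hx : (1:ℝ) ≤ exp ε := by simpa using Real.exp_le_exp.2 hε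
  have hA : 0 < 1 + q * (exp ε - 1) := by nlinarith
  have heψ : exp ψ = 1 + q * (exp ε - 1) := Real.exp_log hA
  have heψ' : exp (-ψ) = (1 + q * (exp ε - 1))⁻¹ := by
    rw [Real.exp_neg, heψ]
  constructor
  · intro h
    rw [heψ]
    nlinarith
  · intro h
    rw [heψ']
    have hxpos : 0 < exp ε := exp_pos ε
    have hinv : exp (-ε) = (exp ε)⁻¹ := Real.exp_neg ε
    have key : (1 + q * (exp ε - 1))⁻¹ ≤ (1 - q) + q * exp (-ε) := by
      rw [inv_le_iff_one_le_mul₀ hA, hinv]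
      have h2 : ((1 - q) + q * (exp ε)⁻¹) * (1 + q * (exp ε - 1)) * exp ε ≥ exp ε := by
        have hexp : ((1 - q) + q * (exp ε)⁻¹) * (1 + q * (exp ε - 1)) * exp ε
            = (1 - q) * (1 + q * (exp ε - 1)) * exp ε + q * (1 + q * (exp ε - 1)) := by
          field_simp
        rw [hexp]
        nlinarith [sq_nonneg (exp ε - 1), mul_nonneg (mul_nonneg hq0.le (sub_nonneg.2 hq1)) (sq_nonneg (exp ε - 1))]
      nlinarith
    nlinarith [mul_le_mul_of_nonneg_right key hp₂]
end
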